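/- Under the i.i.d. observation model, the mean error follows the linear dynamics exactly: for every k ≥ 0, E[V_k] − V^π = A^k (V_0 − V^π), where A = I + α(γ D P^π − D). Consequently ‖E[V_k] − V^π‖_∞ ≤ ρ^k ‖V_0 − V^π‖_∞, where ρ = 1 − α·d_min·(1−γ). -/

import Mathlib

open Finset Matrix MeasureTheory ProbabilityTheory

noncomputable def tdF {S A : Type*} [DecidableEq S] (α γ : ℝ) (r : S → A → S → ℝ)
    (V₀ : S → ℝ) : ℕ → (ℕ → S × A × S) → S → ℝ
  | 0, _ => V₀
  | (k+1), xs => fun t =>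
      tdF α γ r V₀ k xs t + α * (if t = (xs k).1 then 1 else 0) *
        (r (xs k).1 (xs k).2.1 (xs k).2.2 + γ * tdF α γ r V₀ k xs (xs k).2.2
          - tdF α γ r V₀ k xs (xs k).1)

lemma tdF_congr {S A : Type*} [DecidableEq S] (α γ : ℝ) (r : S → A → S → ℝ)
    (V₀ : S → ℝ) : ∀ (k : ℕ) (xs ys : ℕ → S × A × S), (∀ i < k, xs i = ys i) →
    tdF α γ r V₀ k xs = tdF α γ r V₀ k ys
  | 0, xs, ys, _ => rfl
  | (k+1), xs, ys, h => by
    have ih := tdF_congr α γ r V₀ k xs ys (fun i hi => h i (Nat.lt_succ_of_lt hi))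
    have hk : xs k = ys k := h k (Nat.lt_succ_self k)
    funext t
    simp [tdF, ih, hk]

/-- **Mean dynamics of TD-learning under the i.i.d. observation model.**
The observations `X k = (s_k, a_k, s'_k)` are i.i.d. with joint law
`q(s,a,s') = d(s)·π(a|s)·P(s'|s,a)`; the TD iterates start from a deterministic `V 0 = V₀`
with `‖V₀‖_∞ ≤ 1` and update
`V (k+1) (s) = V k (s) + α·1{s = s_k}·(r(s_k,a_k,s'_k) + γ V k (s'_k) − V k (s_k))`;
`V^π` solves the Bellman equation.  Then for every `k`, the mean error satisfies
`E[V k] − V^π = A^k (V₀ − V^π)` with `A = I + α(γ D P^π − D)`, and consequently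
`‖E[V k] − V^π‖_∞ ≤ ρ^k ‖V₀ − V^π‖_∞` with `ρ = 1 − α·d_min·(1−γ)`
(the norm `‖·‖` on `S → ℝ` is the sup norm). -/
theorem td_mean_error_dynamics
    {S A : Type*} [Fintype S] [Nonempty S] [DecidableEq S] [Fintype A]
    [MeasurableSpace S] [MeasurableSingletonClass S]
    [MeasurableSpace A] [MeasurableSingletonClass A]
    {Ω : Type*} [MeasurableSpace Ω] (μ : Measure Ω) [IsProbabilityMeasure μ]
    (γ α : ℝ) (hγ0 : 0 ≤ γ) (hγ1 : γ < 1) (hα0 : 0 < α) (hα1 : α < 1)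
    (π : S → A → ℝ) (hπ0 : ∀ s a, 0 ≤ π s a) (hπ1 : ∀ s, ∑ a, π s a = 1)
    (P : S → A → S → ℝ) (hP0 : ∀ s a s', 0 ≤ P s a s') (hP1 : ∀ s a, ∑ s', P s a s' = 1)
    (r : S → A → S → ℝ) (hr : ∀ s a s', |r s a s'| ≤ 1)
    (d : S → ℝ) (hd : ∀ s, 0 < d s) (hd1 : ∑ s, d s = 1)
    (X : ℕ → Ω → S × A × S) (hXmeas : ∀ k, Measurable (X k))
    (hIndep : iIndepFun X μ)
    (hLaw : ∀ k, μ.map (X k) =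
      ∑ t : S × A × S,
        ENNReal.ofReal (d t.1 * π t.1 t.2.1 * P t.1 t.2.1 t.2.2) • Measure.dirac t)
    (Vpi : S → ℝ)
    (hBell : ∀ s, Vpi s = (∑ a, ∑ s', π s a * P s a s' * r s a s') +
      γ * ∑ s', (∑ a, π s a * P s a s') * Vpi s')
    (V₀ : S → ℝ) (hV₀ : ‖V₀‖ ≤ 1)
    (V : ℕ → Ω → S → ℝ) (hV0 : ∀ ω, V 0 ω = V₀)
    (hVstep : ∀ k ω t, V (k + 1) ω t = V k ω t +
      α * (if t = (X k ω).1 then 1 else 0) *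
        (r (X k ω).1 (X k ω).2.1 (X k ω).2.2 + γ * V k ω (X k ω).2.2 - V k ω (X k ω).1))
    (Amat : Matrix S S ℝ)
    (hAmat : Amat = 1 + α • (γ • (Matrix.diagonal d * Matrix.of fun s s' => ∑ a, π s a * P s a s')
      - Matrix.diagonal d))
    (ρ : ℝ) (hρ : ρ = 1 - α * (⨅ s : S, d s) * (1 - γ)) :
    ∀ k : ℕ,
      ((fun s => ∫ ω, V k ω s ∂μ) - Vpi) = (Amat ^ k).mulVec (V₀ - Vpi) ∧
      ‖(fun s => ∫ ω, V k ω s ∂μ) - Vpi‖ ≤ ρ ^ k * ‖V₀ - Vpi‖ := by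
  classical
  have hAne : Nonempty A := by
    rcases isEmpty_or_nonempty A with h | h
    · have h1 := hπ1 (Classical.arbitrary S)
      simp at h1
    · exact h
  have hTne : Nonempty (S × A × S) := inferInstance
  obtain ⟨junk⟩ := hTne
  -- weights
  set w : S × A × S → ℝ := fun u => d u.1 * π u.1 u.2.1 * P u.1 u.2.1 u.2.2 with hwdef
  have hw0 : ∀ u, 0 ≤ w u := fun u =>
    mul_nonneg (mul_nonneg (hd u.1).le (hπ0 _ _)) (hP0 _ _ _)
  -- law of X k
  have hlawint : ∀ (k : ℕ) (f : S × A × S → ℝ),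
      ∫ ω, f (X k ω) ∂μ = ∑ u : S × A × S, w u * f u := by
    intro k f
    have hfm : Measurable f := measurable_of_finite f
    have hdint : ∀ u : S × A × S,
        Integrable f (ENNReal.ofReal (w u) • Measure.dirac u) := by
      intro u
      refine Integrable.smul_measure ?_ ENNReal.ofReal_ne_top
      refine ⟨hfm.aestronglyMeasurable, ?_⟩
      rw [HasFiniteIntegral, lintegral_dirac]
      exact ENNReal.coe_lt_top
    rw [← integral_map (hXmeas k).aemeasurable hfm.aestronglyMeasurable, hLaw k,
      integral_finset_sum_measure (fun u _ => hdint u)]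
    refine Finset.sum_congr rfl fun u _ => ?_
    rw [integral_smul_measure, integral_dirac, ENNReal.toReal_ofReal (hw0 u), smul_eq_mul]
  -- representation through finite discrete data
  have hVF : ∀ (k : ℕ) (ω : Ω), V k ω = tdF α γ r V₀ k (fun i => X i ω) := by
    intro k
    induction k with
    | zero => intro ω; exact hV0 ω
    | succ k ih =>
      intro ω; funext t
      rw [hVstep k ω t, ih ω]
      rfl
  have hVE : ∀ (k : ℕ) (ω : Ω),
      V k ω = tdF α γ r V₀ k
        (fun i => if h : i ∈ Finset.range k then X i ω else junk) := by
    intro k ω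
    rw [hVF k ω]
    exact tdF_congr α γ r V₀ k _ _ fun i hi => by
      rw [dif_pos (Finset.mem_range.2 hi)]
  -- generic representation of functionals of (V k, X k)
  have hrep : ∀ (k : ℕ) (g : (S → ℝ) → (S × A × S) → ℝ),
      (fun ω => g (V k ω) (X k ω)) =
        (fun p : (↥(Finset.range k) → S × A × S) × (S × A × S) =>
          g (tdF α γ r V₀ k
              (fun i => if h : i ∈ Finset.range k then p.1 ⟨i, h⟩ else junk)) p.2) ∘
        (fun ω => ((fun i : ↥(Finset.range k) => X (i : ℕ) ω), X k ω)) := by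
    intro k g
    funext ω
    simp only [Function.comp_apply]
    rw [hVE k ω]
  have hTmeas : ∀ k : ℕ, Measurable
      (fun ω => ((fun i : (Finset.range k : Finset ℕ) => X (i : ℕ) ω), X k ω)) := by
    intro k
    refine Measurable.prodMk ?_ (hXmeas k)
    exact measurable_pi_lambda _ fun i : ↥(Finset.range k) => hXmeas (i : ℕ)
  have hGenMeas : ∀ (k : ℕ) (g : (S → ℝ) → (S × A × S) → ℝ),
      Measurable (fun ω => g (V k ω) (X k ω)) := by
    intro k g
    rw [hrep k g]
    exact (measurable_of_finite _).comp (hTmeas k)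
  have hGenInt : ∀ (k : ℕ) (g : (S → ℝ) → (S × A × S) → ℝ),
      Integrable (fun ω => g (V k ω) (X k ω)) μ := by
    intro k g
    rw [hrep k g]
    refine Integrable.mono' (integrable_const ‖(fun p :
        (↥(Finset.range k) → S × A × S) × (S × A × S) =>
          g (tdF α γ r V₀ k
              (fun i => if h : i ∈ Finset.range k then p.1 ⟨i, h⟩ else junk)) p.2)‖)
      ((measurable_of_finite _).comp (hTmeas k)).aestronglyMeasurable
      (ae_of_all _ fun ω => ?_)
    exact norm_le_pi_norm (fun p : (↥(Finset.range k) → S × A × S) × (S × A × S) =>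
          g (tdF α γ r V₀ k
              (fun i => if h : i ∈ Finset.range k then p.1 ⟨i, h⟩ else junk)) p.2) _
  have hIntV : ∀ (k : ℕ) (s : S), Integrable (fun ω => V k ω s) μ :=
    fun k s => hGenInt k (fun v _ => v s)
  -- mean iterates
  set m : ℕ → S → ℝ := fun k s => ∫ ω, V k ω s ∂μ with hm
  -- the key independence identity
  have hkey : ∀ (k : ℕ) (u : S × A × S) (c : ℝ) (s1 s2 : S),
      ∫ ω, (if X k ω = u then (1:ℝ) else 0) * (c + γ * V k ω s2 - V k ω s1) ∂μ =
        w u * (c + γ * m k s2 - m k s1) := by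
    intro k u c s1 s2
    have hdisj : Disjoint (Finset.range k) ({k} : Finset ℕ) :=
      Finset.disjoint_singleton_right.2 (by simp)
    have hind := hIndep.indepFun_finset (Finset.range k) {k} hdisj hXmeas
    set φ : (↥(Finset.range k) → S × A × S) → ℝ := fun rs =>
      c + γ * tdF α γ r V₀ k
          (fun i => if h : i ∈ Finset.range k then rs ⟨i, h⟩ else junk) s2
        - tdF α γ r V₀ k
          (fun i => if h : i ∈ Finset.range k then rs ⟨i, h⟩ else junk) s1 with hφdef
    set ψ : (↥({k} : Finset ℕ) → S × A × S) → ℝ := fun rs =>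
      if rs ⟨k, Finset.mem_singleton_self k⟩ = u then 1 else 0 with hψdef
    have heq2 : (fun ω => c + γ * V k ω s2 - V k ω s1) =
        φ ∘ (fun ω (i : ↥(Finset.range k)) => X (i : ℕ) ω) := by
      funext ω
      simp only [Function.comp_apply, hφdef]
      rw [hVE k ω]
    have heq1 : (fun ω => if X k ω = u then (1:ℝ) else 0) =
        ψ ∘ (fun ω (i : ↥({k} : Finset ℕ)) => X (i : ℕ) ω) := rfl
    have hindc : IndepFun (fun ω => if X k ω = u then (1:ℝ) else 0)
        (fun ω => c + γ * V k ω s2 - V k ω s1) μ := by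
      rw [heq1, heq2]
      exact (hind.comp (measurable_of_finite φ) (measurable_of_finite ψ)).symm
    have hint1 : Integrable (fun ω => if X k ω = u then (1:ℝ) else 0) μ :=
      hGenInt k (fun _ u' => if u' = u then 1 else 0)
    have hint2 : Integrable (fun ω => c + γ * V k ω s2 - V k ω s1) μ :=
      (Integrable.add (integrable_const c) ((hIntV k s2).const_mul γ)).sub (hIntV k s1)
    have hmul := ProbabilityTheory.IndepFun.integral_mul_eq_mul_integral hindc hint1.aestronglyMeasurable hint2.aestronglyMeasurable
    have : ∫ ω, (if X k ω = u then (1:ℝ) else 0) * (c + γ * V k ω s2 - V k ω s1) ∂μ =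
        (∫ ω, (if X k ω = u then (1:ℝ) else 0) ∂μ) *
          ∫ ω, (c + γ * V k ω s2 - V k ω s1) ∂μ := hmul
    rw [this]
    have hi1 : ∫ ω, (if X k ω = u then (1:ℝ) else 0) ∂μ = w u := by
      have := hlawint k (fun v => if v = u then (1:ℝ) else 0)
      simpa [mul_ite, Finset.sum_ite_eq'] using this
    have hi2 : ∫ ω, (c + γ * V k ω s2 - V k ω s1) ∂μ = c + γ * m k s2 - m k s1 := by
      have ha : Integrable (fun ω : Ω => c + γ * V k ω s2) μ :=
        (integrable_const c).add ((hIntV k s2).const_mul γ)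
      have hb : Integrable (fun ω : Ω => γ * V k ω s2) μ := (hIntV k s2).const_mul γ
      rw [integral_sub ha (hIntV k s1), integral_add (integrable_const c) hb,
        integral_const, integral_const_mul]
      simp [hm]
    rw [hi1, hi2]
  -- recursion for the mean
  have hQ1 : ∀ s : S, ∑ s', ∑ a, π s a * P s a s' = 1 := by
    intro s
    rw [Finset.sum_comm]
    simp_rw [← Finset.mul_sum]
    simp [hP1, hπ1 s]
  have hA : ∀ t s' : S, Amat t s' =
      α * γ * (d t * ∑ a, π t a * P t a s') + (if t = s' then 1 - α * d t else 0) := by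
    intro t s'
    rw [hAmat]
    simp only [Matrix.add_apply, Matrix.one_apply, Matrix.smul_apply, Matrix.sub_apply,
      Matrix.diagonal_mul, Matrix.of_apply, Matrix.diagonal_apply, smul_eq_mul]
    split_ifs <;> ring
  have hmrec : ∀ (k : ℕ) (t : S),
      m (k+1) t - Vpi t = ∑ s', Amat t s' * (m k s' - Vpi s') := by
    intro k t
    -- step 1: integral of the update
    have e0 : m (k+1) t = ∫ ω, (V k ω t + α * ((if t = (X k ω).1 then (1:ℝ) else 0) *
        (r (X k ω).1 (X k ω).2.1 (X k ω).2.2 + γ * V k ω (X k ω).2.2 - V k ω (X k ω).1))) ∂μ := by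
      refine integral_congr_ae (ae_of_all _ fun ω => ?_)
      show V (k+1) ω t = _
      rw [hVstep k ω t]; ring
    have hintb : Integrable (fun ω => (if t = (X k ω).1 then (1:ℝ) else 0) *
        (r (X k ω).1 (X k ω).2.1 (X k ω).2.2 + γ * V k ω (X k ω).2.2 - V k ω (X k ω).1)) μ :=
      hGenInt k (fun v u => (if t = u.1 then (1:ℝ) else 0) *
        (r u.1 u.2.1 u.2.2 + γ * v u.2.2 - v u.1))
    have e1 : m (k+1) t = m k t + α * ∫ ω, ((if t = (X k ω).1 then (1:ℝ) else 0) *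
        (r (X k ω).1 (X k ω).2.1 (X k ω).2.2 + γ * V k ω (X k ω).2.2 - V k ω (X k ω).1)) ∂μ := by
      rw [e0, integral_add (hIntV k t) (hintb.const_mul α), integral_const_mul]
    -- step 2: expand over the finitely many outcomes of X k
    have hsum : ∀ ω, (if t = (X k ω).1 then (1:ℝ) else 0) *
        (r (X k ω).1 (X k ω).2.1 (X k ω).2.2 + γ * V k ω (X k ω).2.2 - V k ω (X k ω).1) =
        ∑ u : S × A × S, (if t = u.1 then (1:ℝ) else 0) *
          ((if X k ω = u then (1:ℝ) else 0) *
            (r u.1 u.2.1 u.2.2 + γ * V k ω u.2.2 - V k ω u.1)) := by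
      intro ω
      rw [Finset.sum_eq_single (X k ω)]
      · simp
      · intro u _ hu
        simp [Ne.symm hu]
      · intro h; exact absurd (Finset.mem_univ _) h
    have e2 : ∫ ω, ((if t = (X k ω).1 then (1:ℝ) else 0) *
        (r (X k ω).1 (X k ω).2.1 (X k ω).2.2 + γ * V k ω (X k ω).2.2 - V k ω (X k ω).1)) ∂μ =
        ∑ u : S × A × S, (if t = u.1 then (1:ℝ) else 0) *
          (w u * (r u.1 u.2.1 u.2.2 + γ * m k u.2.2 - m k u.1)) := by
      rw [integral_congr_ae (ae_of_all _ hsum),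
        integral_finset_sum _ (fun u _ => ?_)]
      · refine Finset.sum_congr rfl fun u _ => ?_
        rw [integral_const_mul, hkey k u (r u.1 u.2.1 u.2.2) u.1 u.2.2]
      · exact (hGenInt k (fun v u' => (if u'.1 = u.1 ∧ False then 0 else
          (if t = u.1 then (1:ℝ) else 0) *
          ((if u' = u then (1:ℝ) else 0) * (r u.1 u.2.1 u.2.2 + γ * v u.2.2 - v u.1))))).congr
          (ae_of_all _ fun ω => by simp)
    -- step 3: collapse the sum over the first coordinate
    have e3 : ∑ u : S × A × S, (if t = u.1 then (1:ℝ) else 0) *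
          (w u * (r u.1 u.2.1 u.2.2 + γ * m k u.2.2 - m k u.1)) =
        ∑ a, ∑ s', d t * π t a * P t a s' * (r t a s' + γ * m k s' - m k t) := by
      rw [Fintype.sum_prod_type, Finset.sum_eq_single t]
      · rw [Fintype.sum_prod_type]
        refine Finset.sum_congr rfl fun a _ => Finset.sum_congr rfl fun s' _ => ?_
        simp [hwdef]
      · intro s _ hst
        refine Finset.sum_eq_zero fun p _ => ?_
        simp [Ne.symm hst]
      · intro h; exact absurd (Finset.mem_univ _) h
    -- step 4: algebra
    have t1 : ∑ a, ∑ s', d t * π t a * P t a s' * r t a s' =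
        d t * ∑ a, ∑ s', π t a * P t a s' * r t a s' := by
      rw [Finset.mul_sum]
      refine Finset.sum_congr rfl fun a _ => ?_
      rw [Finset.mul_sum]
      exact Finset.sum_congr rfl fun s' _ => by ring
    have t2 : ∑ a, ∑ s', d t * π t a * P t a s' * (γ * m k s') =
        γ * (d t * ∑ s', (∑ a, π t a * P t a s') * m k s') := by
      rw [Finset.sum_comm, Finset.mul_sum, Finset.mul_sum]
      refine Finset.sum_congr rfl fun s' _ => ?_
      rw [Finset.sum_mul, Finset.mul_sum, Finset.mul_sum]
      exact Finset.sum_congr rfl fun a _ => by ring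
    have t3 : ∑ a, ∑ s', d t * π t a * P t a s' * m k t = d t * m k t := by
      have h1 : ∀ a, ∑ s', d t * π t a * P t a s' * m k t = d t * π t a * m k t := by
        intro a
        rw [← Finset.sum_mul, ← Finset.mul_sum, hP1 t a, mul_one]
      rw [Finset.sum_congr rfl fun a _ => h1 a]
      have : ∑ a, d t * π t a * m k t = (d t * ∑ a, π t a) * m k t := by
        rw [← Finset.sum_mul, Finset.mul_sum]
      rw [this, hπ1 t, mul_one]
    have e4 : ∑ a, ∑ s', d t * π t a * P t a s' * (r t a s' + γ * m k s' - m k t) =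
        d t * (∑ a, ∑ s', π t a * P t a s' * r t a s') +
          γ * (d t * ∑ s', (∑ a, π t a * P t a s') * m k s') - d t * m k t := by
      have expand : ∀ a, ∀ s' : S,
          d t * π t a * P t a s' * (r t a s' + γ * m k s' - m k t) =
          d t * π t a * P t a s' * r t a s' + d t * π t a * P t a s' * (γ * m k s') -
            d t * π t a * P t a s' * m k t := by intro a s'; ring
      simp_rw [expand, Finset.sum_sub_distrib, Finset.sum_add_distrib]
      rw [t1, t2, t3]
    -- step 5: expand RHS
    have e5 : ∑ s', Amat t s' * (m k s' - Vpi s') =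
        α * γ * d t * (∑ s', (∑ a, π t a * P t a s') * m k s') -
        α * γ * d t * (∑ s', (∑ a, π t a * P t a s') * Vpi s') +
        (1 - α * d t) * (m k t - Vpi t) := by
      have hterm : ∀ s', Amat t s' * (m k s' - Vpi s') =
          (α * γ * d t) * ((∑ a, π t a * P t a s') * m k s') -
          (α * γ * d t) * ((∑ a, π t a * P t a s') * Vpi s') +
          (if t = s' then (1 - α * d t) * (m k s' - Vpi s') else 0) := by
        intro s'
        rw [hA t s']
        split_ifs <;> ring
      rw [Finset.sum_congr rfl fun s' _ => hterm s']
      rw [Finset.sum_add_distrib, Finset.sum_sub_distrib, Finset.sum_ite_eq]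
      simp [← Finset.mul_sum]
    -- conclude
    have hbell := hBell t
    rw [e1, e2, e3, e4, e5]
    linear_combination (-(α * d t)) * hbell
  -- contraction estimate
  obtain ⟨s0, hs0⟩ := Finite.exists_min d
  have hdmin_le : ∀ s, (⨅ s : S, d s) ≤ d s := fun s => ciInf_le (Finite.bddBelow_range d) s
  have hdmin_pos : 0 < ⨅ s : S, d s := lt_of_lt_of_le (hd s0) (le_ciInf hs0)
  have hd_le1 : ∀ s, d s ≤ 1 := by
    intro s
    rw [← hd1]
    exact Finset.single_le_sum (f := d) (fun i _ => (hd i).le) (Finset.mem_univ s)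
  have hρ0 : 0 < ρ := by
    rw [hρ]
    have hle : (⨅ s : S, d s) ≤ 1 := le_trans (hdmin_le s0) (hd_le1 s0)
    have h1 : α * (⨅ s : S, d s) * (1 - γ) < 1 := by
      calc α * (⨅ s : S, d s) * (1 - γ) ≤ α * (⨅ s : S, d s) * 1 := by
            refine mul_le_mul_of_nonneg_left (by linarith) ?_
            exact mul_nonneg hα0.le hdmin_pos.le
        _ = α * (⨅ s : S, d s) := mul_one _
        _ ≤ α * 1 := mul_le_mul_of_nonneg_left hle hα0.le
        _ < 1 := by linarith
    linarith
  have hA0 : ∀ t s', 0 ≤ Amat t s' := by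
    intro t s'
    rw [hA t s']
    have hQ0 : 0 ≤ ∑ a, π t a * P t a s' :=
      Finset.sum_nonneg fun a _ => mul_nonneg (hπ0 t a) (hP0 t a s')
    have h1 : 0 ≤ 1 - α * d t := by nlinarith [hd t, hd_le1 t]
    have h2 : 0 ≤ α * γ * (d t * ∑ a, π t a * P t a s') :=
      mul_nonneg (mul_nonneg hα0.le hγ0) (mul_nonneg (hd t).le hQ0)
    split_ifs <;> linarith
  have hrow : ∀ t, ∑ s', Amat t s' ≤ ρ := by
    intro t
    have : ∑ s', Amat t s' = 1 - α * d t * (1 - γ) := by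
      rw [Finset.sum_congr rfl fun s' _ => hA t s']
      rw [Finset.sum_add_distrib, Finset.sum_ite_eq]
      simp only [Finset.mem_univ, if_true]
      rw [← Finset.mul_sum]
      have : ∑ s', d t * ∑ a, π t a * P t a s' = d t := by
        rw [← Finset.mul_sum, hQ1 t, mul_one]
      rw [this]
      ring
    rw [this, hρ]
    have := hdmin_le t
    nlinarith [mul_nonneg hα0.le (sub_nonneg.2 hγ1.le)]
  have hcontr : ∀ v : S → ℝ, ‖Amat.mulVec v‖ ≤ ρ * ‖v‖ := by
    intro v
    rw [pi_norm_le_iff_of_nonneg (mul_nonneg hρ0.le (norm_nonneg v))]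
    intro t
    have hcoord : Amat.mulVec v t = ∑ s', Amat t s' * v s' := by
      simp [Matrix.mulVec, dotProduct]
    rw [Real.norm_eq_abs, hcoord]
    calc |∑ s', Amat t s' * v s'| ≤ ∑ s', |Amat t s' * v s'| :=
          Finset.abs_sum_le_sum_abs _ _
      _ ≤ ∑ s', Amat t s' * ‖v‖ := by
          refine Finset.sum_le_sum fun s' _ => ?_
          rw [abs_mul, abs_of_nonneg (hA0 t s')]
          refine mul_le_mul_of_nonneg_left ?_ (hA0 t s')
          simpa [Real.norm_eq_abs] using norm_le_pi_norm v s'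
      _ = (∑ s', Amat t s') * ‖v‖ := (Finset.sum_mul _ _ _).symm
      _ ≤ ρ * ‖v‖ := mul_le_mul_of_nonneg_right (hrow t) (norm_nonneg v)
  -- base case
  have hm0 : ∀ s, m 0 s = V₀ s := by
    intro s
    simp [hm, hV0]
  -- functional form of the recursion
  have hmfun : ∀ k : ℕ, ((fun s => m (k+1) s) - Vpi) = Amat.mulVec ((fun s => m k s) - Vpi) := by
    intro k
    funext t
    have : Amat.mulVec ((fun s => m k s) - Vpi) t = ∑ s', Amat t s' * (m k s' - Vpi s') := by
      simp [Matrix.mulVec, dotProduct]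
    rw [Pi.sub_apply, this]
    exact hmrec k t
  -- main induction
  intro k
  have hgoal : ∀ k : ℕ, ((fun s => m k s) - Vpi) = (Amat ^ k).mulVec (V₀ - Vpi) ∧
      ‖(fun s => m k s) - Vpi‖ ≤ ρ ^ k * ‖V₀ - Vpi‖ := by
    intro k
    induction k with
    | zero =>
      constructor
      · rw [pow_zero, Matrix.one_mulVec]
        funext s
        simp [hm0 s]
      · rw [pow_zero, one_mul]
        have : ((fun s => m 0 s) - Vpi) = V₀ - Vpi := by
          funext s; simp [hm0 s]
        rw [this]
    | succ k ih =>
      obtain ⟨ih1, ih2⟩ := ih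
      constructor
      · rw [hmfun k, ih1, Matrix.mulVec_mulVec, ← pow_succ']
      · rw [hmfun k]
        calc ‖Amat.mulVec ((fun s => m k s) - Vpi)‖ ≤ ρ * ‖(fun s => m k s) - Vpi‖ :=
              hcontr _
          _ ≤ ρ * (ρ ^ k * ‖V₀ - Vpi‖) := mul_le_mul_of_nonneg_left ih2 hρ0.le
          _ = ρ ^ (k+1) * ‖V₀ - Vpi‖ := by ring
  exact hgoal k
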